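/- Fix integers a ≥ 1 and L ≥ 1, and for ε ∈ ℂ let |φ(ε)⟩ = ∑_{i=0}^{a} ε^i |i⟩ ∈ ℂ^{a+1}. Then, for every ε, ∑_{j=0}^{a} (-1)^{a-j} C(a,j) |φ(jε)⟩^{⊗L} = ∑_{α≥0} ε^α · c_{α,a} · |χ_{α,a,L}⟩, where c_{α,a} = ∑_{j=0}^{a} (-1)^{a-j} C(a,j) j^α and |χ_{α,a,L}⟩ = ∑_{i₁+…+i_L = α, 0 ≤ i_k ≤ a} |i₁,…,i_L⟩. -/

import Mathlib

theorem weight_state_expansion (a L : ℕ) (ha : 1 ≤ a) (hL : 1 ≤ L) (ε : ℂ) :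
    (fun i : Fin L → Fin (a + 1) =>
        ∑ j ∈ Finset.range (a + 1),
          (-1 : ℂ) ^ (a - j) * (a.choose j) * ∏ k, ((j : ℂ) * ε) ^ ((i k : ℕ)))
      = (fun i : Fin L → Fin (a + 1) =>
        ∑ α ∈ Finset.range (a * L + 1),
          ε ^ α * (∑ j ∈ Finset.range (a + 1),
              (-1 : ℂ) ^ (a - j) * (a.choose j) * (j : ℂ) ^ α) *
            (if (∑ k, ((i k : ℕ))) = α then 1 else 0)) := by
  funext i
  set S := ∑ k, ((i k : ℕ)) with hS
  have hSle : S ∈ Finset.range (a * L + 1) := by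
    rw [Finset.mem_range, Nat.lt_succ_iff, hS]
    calc ∑ k, ((i k : ℕ)) ≤ ∑ _k : Fin L, a := by
          apply Finset.sum_le_sum
          intro k _
          exact Nat.lt_succ_iff.mp (i k).isLt
      _ = a * L := by simp [Finset.card_univ, Nat.mul_comm]
  have hrhs : ∑ α ∈ Finset.range (a * L + 1),
      ε ^ α * (∑ j ∈ Finset.range (a + 1),
          (-1 : ℂ) ^ (a - j) * (a.choose j) * (j : ℂ) ^ α) *
        (if S = α then 1 else 0)
      = ε ^ S * ∑ j ∈ Finset.range (a + 1),
          (-1 : ℂ) ^ (a - j) * (a.choose j) * (j : ℂ) ^ S := by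
    rw [Finset.sum_eq_single S]
    · simp
    · intro b _ hb
      simp [Ne.symm hb]
    · intro h; exact absurd hSle h
  rw [hrhs, Finset.mul_sum]
  apply Finset.sum_congr rfl
  intro j _
  rw [Finset.prod_pow_eq_pow_sum, ← hS, mul_pow]
  ring
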